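/- Both $x f$ and $y f$ lie in the ideal $(x^n, y^n, g)$ of $k[s,x,y]$, where $f = \sum_{j=2}^{n-1} (-1)^j x^{n+1-j} y^j$ and $g = xy(x-y)(x+y-sy)$. Hence the maximal ideal $(s,x,y)$ is contained in the colon ideal $((x^n,y^n,g) : f)$. -/

import Mathlib

open MvPolynomial

section Aux

variable {R : Type*} [CommRing R] (s x y : R)

/-- Peeling off the first term of the auxiliary geometric-type sum. -/
lemma aux_qsucc (m : ℕ) :
    (∑ i ∈ Finset.range (m + 1), x ^ (2 * i) * y ^ (2 * (m + 1) - 2 - 2 * i)) =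
      x ^ 2 * (∑ i ∈ Finset.range m, x ^ (2 * i) * y ^ (2 * m - 2 - 2 * i)) + y ^ (2 * m) := by
  rw [Finset.sum_range_succ', Finset.mul_sum]
  congr 1
  · refine Finset.sum_congr rfl fun i _ => ?_
    have h1 : 2 * (i + 1) = 2 * i + 2 := by ring
    rw [h1]
    have h2 : 2 * (m + 1) - 2 - (2 * i + 2) = 2 * m - 2 - 2 * i := by omega
    rw [h2]; ring
  · have h : 2 * (m + 1) - 2 - 2 * 0 = 2 * m := by omega
    rw [h]; simp

/-- Telescoping identity for the auxiliary sum. -/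
lemma aux_dlem (m : ℕ) :
    (x ^ 2 - y ^ 2) * (∑ i ∈ Finset.range m, x ^ (2 * i) * y ^ (2 * m - 2 - 2 * i)) =
      x ^ (2 * m) - y ^ (2 * m) := by
  induction m with
  | zero => simp
  | succ m ih =>
    rw [aux_qsucc]
    have h : 2 * (m + 1) = 2 * m + 2 := by ring
    rw [h]
    linear_combination x ^ 2 * ih

/-- Closed form for `f`. -/
lemma aux_flem (m : ℕ) (hm : 1 ≤ m) :
    (∑ j ∈ Finset.Icc 2 (2 * m), (-1 : R) ^ j * x ^ (2 * m + 2 - j) * y ^ j) =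
      x * y ^ 2 * (x - y) * (∑ i ∈ Finset.range m, x ^ (2 * i) * y ^ (2 * m - 2 - 2 * i)) +
        x * y ^ (2 * m + 1) := by
  induction m, hm using Nat.le_induction with
  | base =>
    norm_num [Finset.Icc_self]
    ring
  | succ m hm ih =>
    rw [aux_qsucc]
    have h1 : 2 * (m + 1) = 2 * m + 1 + 1 := by ring
    rw [h1, Finset.sum_Icc_succ_top (by omega), Finset.sum_Icc_succ_top (by omega)]
    have hsum : (∑ j ∈ Finset.Icc 2 (2 * m), (-1 : R) ^ j * x ^ (2 * m + 1 + 1 + 2 - j) * y ^ j)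
        = x ^ 2 * (∑ j ∈ Finset.Icc 2 (2 * m), (-1 : R) ^ j * x ^ (2 * m + 2 - j) * y ^ j) := by
      rw [Finset.mul_sum]
      refine Finset.sum_congr rfl fun j hj => ?_
      have hj2 : j ≤ 2 * m := (Finset.mem_Icc.mp hj).2
      have h2 : 2 * m + 1 + 1 + 2 - j = 2 + (2 * m + 2 - j) := by omega
      rw [h2, pow_add]; ring
    rw [hsum, ih]
    have hodd : ((-1 : R)) ^ (2 * m + 1) = -1 := Odd.neg_one_pow ⟨m, by ring⟩
    have heven : ((-1 : R)) ^ (2 * m + 1 + 1) = 1 := Even.neg_one_pow ⟨m + 1, by ring⟩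
    have e1 : 2 * m + 1 + 1 + 2 - (2 * m + 1) = 3 := by omega
    have e2 : 2 * m + 1 + 1 + 2 - (2 * m + 1 + 1) = 2 := by omega
    rw [hodd, heven, e1, e2]
    ring

/-- The key reduction: `x y (x - y) x^j y^k ∈ (x^n, y^n, g)` whenever `j + k = 2m`. -/
lemma aux_clem (m : ℕ) :
    ∀ j k : ℕ, j + k = 2 * m →
      x * y * (x - y) * (x ^ j * y ^ k) ∈
        Ideal.span {x ^ (2 * m + 1), y ^ (2 * m + 1), x * y * (x - y) * (x + y - s * y)} := by
  intro j
  induction j with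
  | zero =>
    intro k hk
    have hyn : (y : R) ^ (2 * m + 1) ∈
        Ideal.span {x ^ (2 * m + 1), y ^ (2 * m + 1), x * y * (x - y) * (x + y - s * y)} :=
      Ideal.subset_span (by simp)
    have : x * y * (x - y) * (x ^ 0 * y ^ k) = (x ^ 2 - x * y) * y ^ (2 * m + 1) := by
      have : k = 2 * m := by omega
      subst this
      ring
    rw [this]
    exact Ideal.mul_mem_left _ _ hyn
  | succ j ih =>
    intro k hk
    have hg : x * y * (x - y) * (x + y - s * y) ∈
        Ideal.span {x ^ (2 * m + 1), y ^ (2 * m + 1), x * y * (x - y) * (x + y - s * y)} :=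
      Ideal.subset_span (by simp)
    have key : x * y * (x - y) * (x ^ (j + 1) * y ^ k) =
        (s - 1) * (x * y * (x - y) * (x ^ j * y ^ (k + 1))) +
          (x ^ j * y ^ k) * (x * y * (x - y) * (x + y - s * y)) := by
      ring
    rw [key]
    exact Ideal.add_mem _
      (Ideal.mul_mem_left _ _ (ih (k + 1) (by omega)))
      (Ideal.mul_mem_left _ _ hg)

end Aux

/-- Both `x f` and `y f` lie in `(x^n, y^n, g)`; hence `(s,x,y) ⊆ ((x^n,y^n,g) : f)`. -/
theorem stmt_6 (k : Type*) [Field k] (m n : ℕ) (hm : 4 ≤ m) (hchar : (m : k) ≠ 0)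
    (hn : n = 2 * m + 1) :
    (X 1 : MvPolynomial (Fin 3) k) *
        (∑ j ∈ Finset.Icc 2 (n - 1),
          (-1 : MvPolynomial (Fin 3) k) ^ j * X 1 ^ (n + 1 - j) * X 2 ^ j) ∈
      Ideal.span {(X 1 : MvPolynomial (Fin 3) k) ^ n, X 2 ^ n,
        X 1 * X 2 * (X 1 - X 2) * (X 1 + X 2 - X 0 * X 2)} ∧
    (X 2 : MvPolynomial (Fin 3) k) *
        (∑ j ∈ Finset.Icc 2 (n - 1),
          (-1 : MvPolynomial (Fin 3) k) ^ j * X 1 ^ (n + 1 - j) * X 2 ^ j) ∈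
      Ideal.span {(X 1 : MvPolynomial (Fin 3) k) ^ n, X 2 ^ n,
        X 1 * X 2 * (X 1 - X 2) * (X 1 + X 2 - X 0 * X 2)} ∧
    Ideal.span {(X 0 : MvPolynomial (Fin 3) k), X 1, X 2} ≤
      Submodule.colon
        (Ideal.span {(X 1 : MvPolynomial (Fin 3) k) ^ n, X 2 ^ n,
          X 1 * X 2 * (X 1 - X 2) * (X 1 + X 2 - X 0 * X 2)})
        (Ideal.span {∑ j ∈ Finset.Icc 2 (n - 1),
          (-1 : MvPolynomial (Fin 3) k) ^ j * X 1 ^ (n + 1 - j) * X 2 ^ j}) := by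
  subst hn
  set R := MvPolynomial (Fin 3) k
  set s : R := X 0 with hs
  set x : R := X 1 with hx
  set y : R := X 2 with hy
  set I : Ideal R :=
    Ideal.span {x ^ (2 * m + 1), y ^ (2 * m + 1), x * y * (x - y) * (x + y - s * y)} with hI
  have hxn : x ^ (2 * m + 1) ∈ I := Ideal.subset_span (by simp)
  have hyn : y ^ (2 * m + 1) ∈ I := Ideal.subset_span (by simp)
  have hgI : x * y * (x - y) * (x + y - s * y) ∈ I := Ideal.subset_span (by simp)
  set q : R := ∑ i ∈ Finset.range m, x ^ (2 * i) * y ^ (2 * m - 2 - 2 * i) with hq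
  have hf : (∑ j ∈ Finset.Icc 2 (2 * m + 1 - 1),
      (-1 : R) ^ j * x ^ (2 * m + 1 + 1 - j) * y ^ j) =
      x * y ^ 2 * (x - y) * q + x * y ^ (2 * m + 1) := by
    have h1 : 2 * m + 1 - 1 = 2 * m := rfl
    rw [h1, hq]
    rw [Finset.sum_congr rfl fun j (hj : j ∈ Finset.Icc 2 (2 * m)) => by
      have h2 : 2 * m + 1 + 1 - j = 2 * m + 2 - j := by omega
      rw [h2]]
    exact aux_flem x y m (by omega)
  have hxf : x * (∑ j ∈ Finset.Icc 2 (2 * m + 1 - 1),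
      (-1 : R) ^ j * x ^ (2 * m + 1 + 1 - j) * y ^ j) ∈ I := by
    rw [hf]
    have hterm : (∑ i ∈ Finset.range m,
        x * y * (x - y) * (x ^ (2 * i + 1) * y ^ (2 * m - 1 - 2 * i))) =
        x * (x * y ^ 2 * (x - y) * q) := by
      rw [hq, Finset.mul_sum, Finset.mul_sum]
      refine Finset.sum_congr rfl fun i hi => ?_
      have him := Finset.mem_range.mp hi
      have h1 : 2 * m - 2 - 2 * i = 2 * (m - 1 - i) := by omega
      have h2 : 2 * m - 1 - 2 * i = 2 * (m - 1 - i) + 1 := by omega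
      rw [h1, h2]; ring
    have key : x * (x * y ^ 2 * (x - y) * q + x * y ^ (2 * m + 1)) =
        (∑ i ∈ Finset.range m, x * y * (x - y) * (x ^ (2 * i + 1) * y ^ (2 * m - 1 - 2 * i))) +
          x ^ 2 * y ^ (2 * m + 1) := by
      rw [hterm]; ring
    rw [key]
    exact Ideal.add_mem _
      (Ideal.sum_mem _ fun i hi =>
        aux_clem s x y m (2 * i + 1) (2 * m - 1 - 2 * i)
          (by have := Finset.mem_range.mp hi; omega))
      (Ideal.mul_mem_left _ _ hyn)
  have hyf : y * (∑ j ∈ Finset.Icc 2 (2 * m + 1 - 1),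
      (-1 : R) ^ j * x ^ (2 * m + 1 + 1 - j) * y ^ j) ∈ I := by
    rw [hf]
    have hterm : (∑ i ∈ Finset.range m,
        x * y * (x - y) * (x ^ (2 * i) * y ^ (2 * m - 2 * i))) =
        y * (x * y ^ 2 * (x - y) * q) := by
      rw [hq, Finset.mul_sum, Finset.mul_sum]
      refine Finset.sum_congr rfl fun i hi => ?_
      have him := Finset.mem_range.mp hi
      have h1 : 2 * m - 2 - 2 * i = 2 * (m - 1 - i) := by omega
      have h2 : 2 * m - 2 * i = 2 * (m - 1 - i) + 2 := by omega
      rw [h1, h2]; ring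
    have key : y * (x * y ^ 2 * (x - y) * q + x * y ^ (2 * m + 1)) =
        (∑ i ∈ Finset.range m, x * y * (x - y) * (x ^ (2 * i) * y ^ (2 * m - 2 * i))) +
          (x * y) * y ^ (2 * m + 1) := by
      rw [hterm]; ring
    rw [key]
    exact Ideal.add_mem _
      (Ideal.sum_mem _ fun i hi =>
        aux_clem s x y m (2 * i) (2 * m - 2 * i)
          (by have := Finset.mem_range.mp hi; omega))
      (Ideal.mul_mem_left _ _ hyn)
  have hsf : s * (∑ j ∈ Finset.Icc 2 (2 * m + 1 - 1),
      (-1 : R) ^ j * x ^ (2 * m + 1 + 1 - j) * y ^ j) ∈ I := by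
    rw [hf]
    have hd := aux_dlem x y m
    rw [← hq] at hd
    have key : s * (x * y ^ 2 * (x - y) * q + x * y ^ (2 * m + 1)) =
        x ^ (2 * m + 1) * y + (x * y ^ (2 * m + 1)) * (s - 1) +
          (x * y * (x - y) * (x + y - s * y)) * (-q) := by
      linear_combination (x * y) * hd
    rw [key]
    exact Ideal.add_mem _
      (Ideal.add_mem _ (Ideal.mul_mem_right _ _ hxn) (Ideal.mul_mem_right _ _
        (Ideal.mul_mem_left _ _ hyn)))
      (Ideal.mul_mem_right _ _ hgI)
  refine ⟨hxf, hyf, ?_⟩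
  rw [Ideal.span_insert]
  refine sup_le ?_ ?_
  · rw [Ideal.span_singleton_le_iff_mem, Ideal.mem_colon_span_singleton]
    exact hsf
  · rw [Ideal.span_insert]
    refine sup_le ?_ ?_
    · rw [Ideal.span_singleton_le_iff_mem, Ideal.mem_colon_span_singleton]
      exact hxf
    · rw [Ideal.span_singleton_le_iff_mem, Ideal.mem_colon_span_singleton]
      exact hyf
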